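/- For every u ∈ N and every v ∈ V with P⁺v ≠ 0, there exists R > 0 such that E₂(u,w) ≤ 0 for all w ∈ F_u(v) with ‖w‖_V ≥ R. -/

import Mathlib

open scoped InnerProductSpace
open Filter Topology

/-- Weak sequential compactness of bounded sequences in a real Hilbert space. -/
lemma weak_seq_compact_aux {V : Type*} [NormedAddCommGroup V] [InnerProductSpace ℝ V]
    [CompleteSpace V] (x : ℕ → V) (B : ℝ) (hB : ∀ n, ‖x n‖ ≤ B) :
    ∃ (x₀ : V) (φ : ℕ → ℕ), StrictMono φ ∧
      ∀ y : V, Tendsto (fun k => ⟪x (φ k), y⟫_ℝ) atTop (𝓝 ⟪x₀, y⟫_ℝ) := by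
  have hB0 : 0 ≤ B := le_trans (norm_nonneg (x 0)) (hB 0)
  -- Step 1: diagonal subsequence making all ⟪x (φ k), x m⟫ converge.
  set g : ℕ → (ℕ → ℝ) := fun n m => ⟪x n, x m⟫_ℝ with hg
  have hgmem : ∀ n, g n ∈ Set.pi Set.univ (fun _ : ℕ => Set.Icc (-(B*B)) (B*B)) := by
    intro n m _
    have h1 : |⟪x n, x m⟫_ℝ| ≤ ‖x n‖ * ‖x m‖ := abs_real_inner_le_norm _ _
    have h2 : ‖x n‖ * ‖x m‖ ≤ B * B :=
      mul_le_mul (hB n) (hB m) (norm_nonneg _) hB0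
    have := le_trans h1 h2
    constructor <;> [linarith [neg_abs_le (⟪x n, x m⟫_ℝ)]; linarith [le_abs_self (⟪x n, x m⟫_ℝ)]]
  have hcpt : IsCompact (Set.pi Set.univ (fun _ : ℕ => Set.Icc (-(B*B)) (B*B))) :=
    isCompact_univ_pi fun _ => isCompact_Icc
  obtain ⟨L, -, φ, hφ, hconv⟩ := hcpt.isSeqCompact hgmem
  have hptwise : ∀ m, Tendsto (fun k => ⟪x (φ k), x m⟫_ℝ) atTop (𝓝 (L m)) := by
    intro m
    exact (tendsto_pi_nhds.mp hconv) m
  -- Step 2: for every y, the sequence ⟪x (φ k), y⟫ converges.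
  set M : Submodule ℝ V := (Submodule.span ℝ (Set.range x)).topologicalClosure with hM
  haveI : CompleteSpace M :=
    (Submodule.isClosed_topologicalClosure _).completeSpace_coe
  have hspan : ∀ z ∈ Submodule.span ℝ (Set.range x),
      ∃ l, Tendsto (fun k => ⟪x (φ k), z⟫_ℝ) atTop (𝓝 l) := by
    intro z hz
    induction hz using Submodule.span_induction with
    | mem z hzmem =>
      obtain ⟨m, rfl⟩ := hzmem
      exact ⟨L m, hptwise m⟩
    | zero => exact ⟨0, by simp⟩
    | add z₁ z₂ _ _ h1 h2 =>
      obtain ⟨l₁, hl₁⟩ := h1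
      obtain ⟨l₂, hl₂⟩ := h2
      exact ⟨l₁ + l₂, by simpa [inner_add_right] using hl₁.add hl₂⟩
    | smul c z _ h =>
      obtain ⟨l, hl⟩ := h
      exact ⟨c * l, by simpa [real_inner_smul_right] using hl.const_mul c⟩
  have hMconv : ∀ z ∈ M, ∃ l, Tendsto (fun k => ⟪x (φ k), z⟫_ℝ) atTop (𝓝 l) := by
    intro z hz
    have hcau : CauchySeq (fun k => ⟪x (φ k), z⟫_ℝ) := by
      rw [Metric.cauchySeq_iff]
      intro ε hε
      have hB1 : (0:ℝ) < B + 1 := by linarith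
      have hzcl : z ∈ closure (Submodule.span ℝ (Set.range x) : Set V) := hz
      obtain ⟨z', hz'mem, hz'close⟩ :=
        Metric.mem_closure_iff.mp hzcl (ε / (3 * (B + 1))) (by positivity)
      obtain ⟨l, hl⟩ := hspan z' hz'mem
      obtain ⟨K, hK⟩ := (Metric.cauchySeq_iff.mp hl.cauchySeq) (ε / 3) (by positivity)
      refine ⟨K, fun m hm n hn => ?_⟩
      have hbnd : ∀ j : ℕ, |⟪x (φ j), z⟫_ℝ - ⟪x (φ j), z'⟫_ℝ| ≤ ε / 3 := by
        intro j
        have h1 : ⟪x (φ j), z⟫_ℝ - ⟪x (φ j), z'⟫_ℝ = ⟪x (φ j), z - z'⟫_ℝ := by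
          rw [inner_sub_right]
        rw [h1]
        have h2 : |⟪x (φ j), z - z'⟫_ℝ| ≤ ‖x (φ j)‖ * ‖z - z'‖ := abs_real_inner_le_norm _ _
        have h3 : ‖z - z'‖ ≤ ε / (3 * (B + 1)) := by
          rw [← dist_eq_norm]; exact le_of_lt hz'close
        have h4 : ‖x (φ j)‖ * ‖z - z'‖ ≤ (B + 1) * (ε / (3 * (B + 1))) := by
          apply mul_le_mul _ h3 (norm_nonneg _) (by linarith)
          linarith [hB (φ j)]
        have h5 : (B + 1) * (ε / (3 * (B + 1))) = ε / 3 := by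
          field_simp
        linarith [le_trans h2 h4]
      have h6 := hK m hm n hn
      rw [Real.dist_eq] at h6 ⊢
      have := hbnd m
      have := hbnd n
      have : |⟪x (φ m), z⟫_ℝ - ⟪x (φ n), z⟫_ℝ| ≤
          |⟪x (φ m), z⟫_ℝ - ⟪x (φ m), z'⟫_ℝ| + |⟪x (φ m), z'⟫_ℝ - ⟪x (φ n), z'⟫_ℝ|
            + |⟪x (φ n), z'⟫_ℝ - ⟪x (φ n), z⟫_ℝ| := by
        have := abs_sub_le (⟪x (φ m), z⟫_ℝ) (⟪x (φ m), z'⟫_ℝ) (⟪x (φ n), z⟫_ℝ)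
        have := abs_sub_le (⟪x (φ m), z'⟫_ℝ) (⟪x (φ n), z'⟫_ℝ) (⟪x (φ n), z⟫_ℝ)
        linarith
      have h7 := hbnd m
      have h8 := hbnd n
      rw [abs_sub_comm (⟪x (φ n), z'⟫_ℝ)] at this
      linarith
    exact cauchySeq_tendsto_of_complete hcau
  have key : ∀ y : V, ∃ l, Tendsto (fun k => ⟪x (φ k), y⟫_ℝ) atTop (𝓝 l) := by
    intro y
    have hxM : ∀ n, x n ∈ M := fun n =>
      Submodule.le_topologicalClosure _ (Submodule.subset_span ⟨n, rfl⟩)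
    have hproj : ∀ n, ⟪x n, y⟫_ℝ = ⟪x n, (M.orthogonalProjectionOnto y : V)⟫_ℝ := by
      intro n
      have horth : y - (M.orthogonalProjectionOnto y : V) ∈ Mᗮ :=
        by have := Submodule.sub_starProjection_mem_orthogonal (K := M) y; rwa [Submodule.starProjection_apply] at this
      have h0 : ⟪x n, y - (M.orthogonalProjectionOnto y : V)⟫_ℝ = 0 :=
        (Submodule.mem_orthogonal M _).mp horth (x n) (hxM n)
      have := inner_sub_right (𝕜 := ℝ) (x n) y (M.orthogonalProjectionOnto y : V)
      rw [h0] at this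
      linarith
    obtain ⟨l, hl⟩ := hMconv (M.orthogonalProjectionOnto y : V) (M.orthogonalProjectionOnto y).2
    exact ⟨l, by simpa only [← hproj] using hl⟩
  -- Step 3: the limit functional is bounded linear; use Riesz representation.
  choose F hF using key
  have hFadd : ∀ y y', F (y + y') = F y + F y' := by
    intro y y'
    refine tendsto_nhds_unique (hF (y + y')) ?_
    simpa [inner_add_right] using (hF y).add (hF y')
  have hFsmul : ∀ (c : ℝ) y, F (c • y) = c * F y := by
    intro c y
    refine tendsto_nhds_unique (hF (c • y)) ?_
    simpa [real_inner_smul_right] using (hF y).const_mul c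
  have hFbdd : ∀ y, |F y| ≤ B * ‖y‖ := by
    intro y
    refine le_of_tendsto ((hF y).abs) (Eventually.of_forall fun k => ?_)
    exact le_trans (abs_real_inner_le_norm _ _)
      (mul_le_mul_of_nonneg_right (hB (φ k)) (norm_nonneg _))
  let Flin : V →ₗ[ℝ] ℝ :=
    { toFun := F
      map_add' := hFadd
      map_smul' := hFsmul }
  let Fc : V →L[ℝ] ℝ := LinearMap.mkContinuous Flin B fun y => by
    simpa [Flin] using hFbdd y
  refine ⟨(InnerProductSpace.toDual ℝ V).symm Fc, φ, hφ, fun y => ?_⟩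
  have : ⟪(InnerProductSpace.toDual ℝ V).symm Fc, y⟫_ℝ = Fc y :=
    InnerProductSpace.toDual_symm_apply
  rw [this]
  exact hF y

theorem stmt_5
    {W : Type*} [NormedAddCommGroup W] [InnerProductSpace ℝ W] [CompleteSpace W]
    {V : Type*} [NormedAddCommGroup V] [InnerProductSpace ℝ V] [CompleteSpace V]
    (ι : V →L[ℝ] W) (hι : Function.Injective ι)
    (c : ℝ) (hc : 0 < c) (hιc : ∀ v : V, ‖ι v‖ ≤ c * ‖v‖)
    (Pp Pm : V →L[ℝ] V)
    (hP_sum : ∀ v : V, Pp v + Pm v = v)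
    (hPp_idem : ∀ v : V, Pp (Pp v) = Pp v)
    (hPm_idem : ∀ v : V, Pm (Pm v) = Pm v)
    (hP_orth : ∀ v w : V, ⟪Pp v, Pm w⟫_ℝ = 0)
    (a : V →L[ℝ] V →L[ℝ] ℝ)
    (ha : ∀ v w : V, a v w = ⟪Pp v, Pp w⟫_ℝ - ⟪Pm v, Pm w⟫_ℝ)
    {N : Type*} [NormedAddCommGroup N] [InnerProductSpace ℝ N] [CompleteSpace N]
    (p : ℝ) (hp : 1 < p)
    (b : N → V → ℝ) (f : N → ℝ → ℝ)
    (hb_C2 : ContDiff ℝ 2 (fun q : N × V => b q.1 q.2))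
    (hb_zero : ∀ u : N, b u 0 = 0)
    (hb_nonneg : ∀ (u : N) (v : V), 0 ≤ b u v)
    (hf_cont : ContinuousOn (fun q : N × ℝ => f q.1 q.2) (Set.univ ×ˢ Set.Ici (0:ℝ)))
    (hf_zero : ∀ u : N, f u 0 = 0)
    (hf_mono : ∀ u : N, StrictMonoOn (f u) (Set.Ici (0:ℝ)))
    (hf_nonneg : ∀ (u : N) (t : ℝ), 0 ≤ t → 0 ≤ f u t)
    (hgrad : ∀ (u : N) (v h : V), fderiv ℝ (b u) v h = f u ‖ι v‖ * ⟪ι v, ι h⟫_ℝ)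
    (hb_wcont : ∀ (u : N) (vseq : ℕ → V) (v : V),
      (∀ y : V, Tendsto (fun n => ⟪vseq n, y⟫_ℝ) atTop (𝓝 ⟪v, y⟫_ℝ)) →
      Tendsto (fun n => b u (vseq n)) atTop (𝓝 (b u v)))
    (hb_super : ∀ (u : N) (vseq : ℕ → V) (v : V), v ≠ 0 →
      (∀ y : V, Tendsto (fun n => ⟪vseq n, y⟫_ℝ) atTop (𝓝 ⟪v, y⟫_ℝ)) →
      ∀ s : ℕ → ℝ, Tendsto s atTop atTop →
      Tendsto (fun n => b u (s n • vseq n) / (s n) ^ 2) atTop atTop)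
    :
    ∀ (u : N) (v : V), Pp v ≠ 0 →
      ∃ R : ℝ, 0 < R ∧ ∀ (t : ℝ) (w : V), 0 ≤ t → Pm w = w →
        R ≤ ‖t • v + w‖ →
        (1/2 : ℝ) * a (t • v + w) (t • v + w) - b u (t • v + w) ≤ 0 := by
  intro u v hv
  by_contra hcon
  push_neg at hcon
  choose t w ht hw hRn hE using fun n : ℕ => hcon ((n : ℝ) + 1) (by positivity)
  set Wn : ℕ → V := fun n => t n • v + w n with hWn
  -- basic projection identities
  have hPp0 : ∀ z : V, Pp (Pm z) = 0 := by
    intro z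
    have h1 := hP_sum (Pm z)
    rwa [hPm_idem, add_eq_right] at h1
  have hPm0 : ∀ z : V, Pm (Pp z) = 0 := by
    intro z
    have h1 := hP_sum (Pp z)
    rwa [hPp_idem, add_eq_left] at h1
  have pyth : ∀ z : V, ‖z‖ ^ 2 = ‖Pp z‖ ^ 2 + ‖Pm z‖ ^ 2 := by
    intro z
    have h0 := hP_orth z z
    conv_lhs => rw [← hP_sum z]
    rw [norm_add_sq_real, h0]
    ring
  have haWW : ∀ z : V, a z z = ‖Pp z‖ ^ 2 - ‖Pm z‖ ^ 2 := by
    intro z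
    rw [ha, real_inner_self_eq_norm_sq, real_inner_self_eq_norm_sq]
  -- per-n facts
  have hs_pos : ∀ n, 0 < ‖Wn n‖ := fun n =>
    lt_of_lt_of_le (by positivity) (hRn n)
  have hsn : ∀ n : ℕ, (n : ℝ) + 1 ≤ ‖Wn n‖ := hRn
  have hE' : ∀ n, 0 < (1/2 : ℝ) * (‖Pp (Wn n)‖ ^ 2 - ‖Pm (Wn n)‖ ^ 2) - b u (Wn n) := by
    intro n
    have := hE n
    rwa [haWW] at this
  have hPpW : ∀ n, Pp (Wn n) = t n • Pp v := by
    intro n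
    have hw0 : Pp (w n) = 0 := by rw [← hw n]; exact hPp0 _
    simp [hWn, map_add, map_smul, hw0]
  have hnormPp : ∀ n, ‖Pp (Wn n)‖ = t n * ‖Pp v‖ := by
    intro n
    rw [hPpW, norm_smul, Real.norm_eq_abs, abs_of_nonneg (ht n)]
  have hkey : ∀ n, (‖Wn n‖) ^ 2 < 2 * (t n * ‖Pp v‖) ^ 2 := by
    intro n
    have h1 := hE' n
    have h2 := hb_nonneg u (Wn n)
    have h3 := pyth (Wn n)
    have h4 : ‖Pp (Wn n)‖ ^ 2 = (t n * ‖Pp v‖) ^ 2 := by rw [hnormPp n]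
    linarith
  have hb_half : ∀ n, b u (Wn n) / (‖Wn n‖) ^ 2 < 1 / 2 := by
    intro n
    have h1 := hE' n
    have h2 := pyth (Wn n)
    have h3 : b u (Wn n) < (1/2 : ℝ) * (‖Wn n‖) ^ 2 := by nlinarith [sq_nonneg (‖Pm (Wn n)‖)]
    rw [div_lt_iff₀ (pow_pos (hs_pos n) 2)]
    linarith
  -- inner products with Pp v
  have hinner : ∀ n, ⟪Wn n, Pp v⟫_ℝ = t n * ‖Pp v‖ ^ 2 := by
    intro n
    have hvPp : ⟪v, Pp v⟫_ℝ = ‖Pp v‖ ^ 2 := by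
      have h1 : ⟪Pp v, Pp v⟫_ℝ + ⟪Pm v, Pp v⟫_ℝ = ⟪v, Pp v⟫_ℝ := by
        rw [← inner_add_left, hP_sum v]
      have h2 : ⟪Pm v, Pp v⟫_ℝ = 0 := by rw [real_inner_comm]; exact hP_orth v v
      rw [← h1, h2, real_inner_self_eq_norm_sq, add_zero]
    have hwPp : ⟪w n, Pp v⟫_ℝ = 0 := by
      rw [← hw n, real_inner_comm]
      exact hP_orth v (w n)
    show ⟪t n • v + w n, Pp v⟫_ℝ = t n * ‖Pp v‖ ^ 2
    simp only [inner_add_left, real_inner_smul_left, hvPp, hwPp, add_zero]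
  -- normalized sequence
  set xs : ℕ → V := fun n => (‖Wn n‖)⁻¹ • Wn n with hxs
  have hxsnorm : ∀ n, ‖xs n‖ ≤ 1 := by
    intro n
    rw [hxs]
    simp only [norm_smul, Real.norm_eq_abs, abs_of_nonneg (inv_nonneg.2 (le_of_lt (hs_pos n)))]
    rw [inv_mul_cancel₀ (ne_of_gt (hs_pos n))]
  obtain ⟨x₀, φ, hφ, hweak⟩ := weak_seq_compact_aux xs 1 hxsnorm
  -- the weak limit is nonzero
  have hPv_pos : 0 < ‖Pp v‖ := norm_pos_iff.mpr hv
  have htlow : ∀ n, ‖Wn n‖ / 2 < t n * ‖Pp v‖ := by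
    intro n
    have h1 := hkey n
    have h2 : 0 ≤ t n * ‖Pp v‖ := mul_nonneg (ht n) (norm_nonneg _)
    nlinarith [hs_pos n]
  have hεle : ∀ n, ‖Pp v‖ / 2 ≤ ⟪xs n, Pp v⟫_ℝ := by
    intro n
    rw [hxs]
    simp only [real_inner_smul_left, hinner]
    rw [inv_mul_eq_div, le_div_iff₀ (hs_pos n)]
    have h1 := htlow n
    nlinarith
  have hx₀inner : ‖Pp v‖ / 2 ≤ ⟪x₀, Pp v⟫_ℝ :=
    ge_of_tendsto' (hweak (Pp v)) fun k => hεle (φ k)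
  have hx₀ne : x₀ ≠ 0 := by
    intro h0
    rw [h0, inner_zero_left] at hx₀inner
    linarith
  -- ‖Wn (φ k)‖ → ∞
  have hsφ : Tendsto (fun k => ‖Wn (φ k)‖) atTop atTop := by
    have h1 : Tendsto (fun k : ℕ => (k : ℝ) + 1) atTop atTop :=
      tendsto_atTop_add_const_right atTop 1 tendsto_natCast_atTop_atTop
    refine tendsto_atTop_mono (fun k => ?_) h1
    have h2 : (k : ℝ) ≤ (φ k : ℝ) := Nat.cast_le.2 hφ.le_apply
    linarith [hsn (φ k)]
  have final := hb_super u (fun k => xs (φ k)) x₀ hx₀ne (fun y => hweak y)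
    (fun k => ‖Wn (φ k)‖) hsφ
  have hsmul : ∀ n, ‖Wn n‖ • xs n = Wn n := by
    intro n
    rw [hxs]
    exact smul_inv_smul₀ (ne_of_gt (hs_pos n)) _
  obtain ⟨k, hk⟩ := (final.eventually_ge_atTop 1).exists
  simp only [hsmul] at hk
  have := hb_half (φ k)
  linarith
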